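/- For every p ∈ (1,2) there exists a constant C = C(p) > 0, depending only on p, such that for every positive integer n and every s ∈ ℝ, |Φ_n'(s) · s| ≤ C · Φ_n(s). -/

import Mathlib

open Real Set Filter

/-- The `C²` regularization of `s ↦ |s|^p` from the proof of Lemma 3.2. -/
noncomputable def Phi (p : ℝ) (n : ℕ) (s : ℝ) : ℝ :=
  if 1 / (n : ℝ) < |s| then |s| ^ p
  else p * (p - 2) / (8 * (n : ℝ) ^ p) * ((n : ℝ) ^ 2 * s ^ 2 - 1) ^ 2
      + p / (2 * (n : ℝ) ^ p) * ((n : ℝ) ^ 2 * s ^ 2 - 1) + 1 / (n : ℝ) ^ p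

lemma Phi_even (p : ℝ) (n : ℕ) (s : ℝ) : Phi p n (-s) = Phi p n s := by
  simp [Phi, abs_neg, neg_sq]

lemma poly_hasDerivAt (p : ℝ) (n : ℕ) (s : ℝ) :
    HasDerivAt (fun x : ℝ => p * (p - 2) / (8 * (n : ℝ) ^ p) * ((n : ℝ) ^ 2 * x ^ 2 - 1) ^ 2
      + p / (2 * (n : ℝ) ^ p) * ((n : ℝ) ^ 2 * x ^ 2 - 1) + 1 / (n : ℝ) ^ p)
    (p * (p - 2) / (2 * (n : ℝ) ^ p) * ((n : ℝ) ^ 2 * s ^ 2 - 1) * ((n : ℝ) ^ 2 * s)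
      + p * (n : ℝ) ^ 2 * s / (n : ℝ) ^ p) s := by
  have h1 : HasDerivAt (fun x : ℝ => (n : ℝ) ^ 2 * x ^ 2 - 1) ((n : ℝ) ^ 2 * (2 * s)) s := by
    simpa using ((hasDerivAt_pow 2 s).const_mul ((n : ℝ) ^ 2)).sub_const 1
  have h2 := (h1.pow 2).const_mul (p * (p - 2) / (8 * (n : ℝ) ^ p))
  have h3 := h1.const_mul (p / (2 * (n : ℝ) ^ p))
  have h4 := (h2.add h3).add_const (1 / (n : ℝ) ^ p)
  exact h4.congr_deriv (by norm_num; ring)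

lemma deriv_Phi_lt (p : ℝ) (n : ℕ) {s : ℝ} (h : |s| < 1 / (n : ℝ)) :
    deriv (Phi p n) s =
      p * (p - 2) / (2 * (n : ℝ) ^ p) * ((n : ℝ) ^ 2 * s ^ 2 - 1) * ((n : ℝ) ^ 2 * s)
        + p * (n : ℝ) ^ 2 * s / (n : ℝ) ^ p := by
  have hev : ∀ᶠ x in nhds s, |x| < 1 / (n : ℝ) :=
    continuous_abs.continuousAt.eventually (eventually_lt_nhds h)
  have heq : Phi p n =ᶠ[nhds s] (fun x : ℝ => p * (p - 2) / (8 * (n : ℝ) ^ p) * ((n : ℝ) ^ 2 * x ^ 2 - 1) ^ 2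
      + p / (2 * (n : ℝ) ^ p) * ((n : ℝ) ^ 2 * x ^ 2 - 1) + 1 / (n : ℝ) ^ p) := by
    filter_upwards [hev] with x hx
    simp only [Phi, if_neg (not_lt.2 hx.le)]
  exact ((poly_hasDerivAt p n s).congr_of_eventuallyEq heq).deriv

lemma Phi_boundary (p : ℝ) (n : ℕ) (hn : 0 < (n : ℝ)) :
    Phi p n (1 / (n : ℝ)) = (1 / (n : ℝ)) ^ p := by
  have h1 : (n : ℝ) ^ 2 * (1 / (n : ℝ)) ^ 2 = 1 := by field_simp
  rw [Phi, if_neg (by rw [abs_of_pos (by positivity)]; exact lt_irrefl _), h1]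
  rw [one_div, one_div, Real.inv_rpow hn.le]
  ring

lemma Phi_ge (p : ℝ) (n : ℕ) (hn : 0 < (n : ℝ)) {s : ℝ} (h : 1 / (n : ℝ) ≤ s) :
    Phi p n s = s ^ p := by
  rcases eq_or_lt_of_le h with he | hl
  · rw [← he]; exact Phi_boundary p n hn
  · rw [Phi, if_pos (by rw [abs_of_pos (lt_trans (by positivity) hl)]; exact hl),
      abs_of_pos (lt_trans (by positivity) hl)]

lemma deriv_Phi_ge (p : ℝ) (n : ℕ) (hn : 0 < (n : ℝ)) {s : ℝ} (h : 1 / (n : ℝ) ≤ s) :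
    deriv (Phi p n) s = p * s ^ (p - 1) := by
  have hs : 0 < s := lt_of_lt_of_le (by positivity) h
  rcases eq_or_lt_of_le h with he | hl
  · -- boundary point s = 1/n
    subst he
    set s : ℝ := 1 / (n : ℝ) with hsdef
    have hs : 0 < s := by positivity
    have hq : (n : ℝ) ^ 2 * s ^ 2 = 1 := by rw [hsdef]; field_simp
    have hNp : (n : ℝ) ^ p = (n : ℝ) ^ (p - 1) * (n : ℝ) := by
      rw [← Real.rpow_add_one hn.ne' (p - 1)]; norm_num
    have hkey : p * (p - 2) / (2 * (n : ℝ) ^ p) * ((n : ℝ) ^ 2 * s ^ 2 - 1) * ((n : ℝ) ^ 2 * s)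
        + p * (n : ℝ) ^ 2 * s / (n : ℝ) ^ p = p * s ^ (p - 1) := by
      rw [hq, hsdef, one_div, Real.inv_rpow hn.le, hNp]
      have h1 : (0:ℝ) < (n : ℝ) ^ (p - 1) := Real.rpow_pos_of_pos hn _
      field_simp
      ring
    have hIci : HasDerivWithinAt (Phi p n) (p * s ^ (p - 1)) (Ici s) s := by
      have base := (Real.hasDerivAt_rpow_const (x := s) (p := p)
        (Or.inl hs.ne')).hasDerivWithinAt (s := Ici s)
      refine base.congr (fun x hx => ?_) (Phi_boundary p n hn)
      rcases eq_or_lt_of_le (mem_Ici.1 hx) with he2 | hl2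
      · rw [← he2]; exact Phi_boundary p n hn
      · rw [Phi, if_pos (by rw [abs_of_pos (lt_trans hs hl2)]; exact hl2),
          abs_of_pos (lt_trans hs hl2)]
    have hIic : HasDerivWithinAt (Phi p n) (p * s ^ (p - 1)) (Iic s) s := by
      have base := ((poly_hasDerivAt p n s).hasDerivWithinAt (s := Iic s))
      rw [hkey] at base
      have heq : Phi p n =ᶠ[nhdsWithin s (Iic s)] (fun x : ℝ => p * (p - 2) / (8 * (n : ℝ) ^ p) * ((n : ℝ) ^ 2 * x ^ 2 - 1) ^ 2
          + p / (2 * (n : ℝ) ^ p) * ((n : ℝ) ^ 2 * x ^ 2 - 1) + 1 / (n : ℝ) ^ p) := by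
        have hmem : Ioi (-s) ∈ nhdsWithin s (Iic s) :=
          mem_nhdsWithin_of_mem_nhds (Ioi_mem_nhds (by linarith))
        filter_upwards [hmem, self_mem_nhdsWithin] with x hx1 hx2
        have : |x| ≤ s := abs_le.2 ⟨le_of_lt hx1, hx2⟩
        simp only [Phi, if_neg (not_lt.2 this)]
        exact if_neg (not_lt.2 this)
      refine base.congr_of_eventuallyEq heq ?_
      rw [Phi, if_neg (by rw [abs_of_pos hs]; exact lt_irrefl _)]
    have := hIic.union hIci
    rw [Iic_union_Ici, hasDerivWithinAt_univ] at this
    exact this.deriv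
  · have hev : ∀ᶠ x in nhds s, 1 / (n : ℝ) < x := eventually_gt_nhds hl
    have base := Real.hasDerivAt_rpow_const (x := s) (p := p) (Or.inl hs.ne')
    have heq : Phi p n =ᶠ[nhds s] (fun x : ℝ => x ^ p) := by
      filter_upwards [hev] with x hx
      have h1 : 1 / (n : ℝ) < |x| := by rw [abs_of_pos (lt_trans (by positivity) hx)]; exact hx
      simp only [Phi, abs_of_pos (lt_trans (by positivity) hx)]
      rw [if_pos hx]
    exact (base.congr_of_eventuallyEq heq).deriv

lemma arith_main (p q : ℝ) (hp1 : 1 < p) (hp2 : p < 2) (hq0 : 0 ≤ q) (hq1 : q ≤ 1) :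
    |p * (p - 2) / 2 * (q - 1) * q + p * q| ≤
      (p + 24 / ((2 - p) * (4 - p))) * (p * (p - 2) / 8 * (q - 1) ^ 2 + p / 2 * (q - 1) + 1) := by
  have hm : 0 < (2 - p) * (4 - p) := by nlinarith
  have hnum0 : 0 ≤ p * (p - 2) / 2 * (q - 1) * q + p * q := by
    nlinarith [mul_nonneg (mul_nonneg (by linarith : (0:ℝ) ≤ p) (by linarith : (0:ℝ) ≤ 2 - p))
      (mul_nonneg hq0 (by linarith : (0:ℝ) ≤ 1 - q)),
      mul_nonneg (by linarith : (0:ℝ) ≤ p) hq0]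
  have hnum3 : p * (p - 2) / 2 * (q - 1) * q + p * q ≤ 3 := by
    nlinarith [mul_nonneg (by linarith : (0:ℝ) ≤ p) (by linarith : (0:ℝ) ≤ 1 - q),
      sq_nonneg (p - 1), sq_nonneg (2 * q - 1),
      mul_nonneg hq0 (by linarith : (0:ℝ) ≤ 1 - q),
      mul_nonneg (mul_nonneg (by linarith : (0:ℝ) ≤ p) (by linarith : (0:ℝ) ≤ 2 - p))
        (mul_nonneg hq0 (by linarith : (0:ℝ) ≤ 1 - q))]
  have hPlow : (2 - p) * (4 - p) / 8 ≤ p * (p - 2) / 8 * (q - 1) ^ 2 + p / 2 * (q - 1) + 1 := by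
    have h6 : 0 ≤ (p - 2) * (q - 1) + (6 - p) := by nlinarith
    nlinarith [mul_nonneg (mul_nonneg (by linarith : (0:ℝ) ≤ p) hq0) h6]
  have hP0 : 0 ≤ p * (p - 2) / 8 * (q - 1) ^ 2 + p / 2 * (q - 1) + 1 :=
    le_trans (by positivity) hPlow
  rw [abs_of_nonneg hnum0]
  calc p * (p - 2) / 2 * (q - 1) * q + p * q ≤ 3 := hnum3
    _ = 24 / ((2 - p) * (4 - p)) * ((2 - p) * (4 - p) / 8) := by field_simp; rw [mul_assoc, mul_div_cancel_right₀ _ hm.ne']; norm_num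
    _ ≤ 24 / ((2 - p) * (4 - p)) * (p * (p - 2) / 8 * (q - 1) ^ 2 + p / 2 * (q - 1) + 1) :=
        mul_le_mul_of_nonneg_left hPlow (by positivity)
    _ ≤ (p + 24 / ((2 - p) * (4 - p))) * (p * (p - 2) / 8 * (q - 1) ^ 2 + p / 2 * (q - 1) + 1) := by
        nlinarith

theorem stmt_5 (p : ℝ) (hp1 : 1 < p) (hp2 : p < 2) :
    ∃ C > (0 : ℝ), ∀ n : ℕ, 0 < n → ∀ s : ℝ,
      |deriv (Phi p n) s * s| ≤ C * Phi p n s := by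
  have hm : 0 < (2 - p) * (4 - p) := by nlinarith
  refine ⟨p + 24 / ((2 - p) * (4 - p)), by positivity, fun n hn s => ?_⟩
  have hN : 0 < (n : ℝ) := by exact_mod_cast hn
  rcases lt_or_ge |s| (1 / (n : ℝ)) with hcase | hcase
  · -- |s| < 1/n : polynomial regime
    rw [deriv_Phi_lt p n hcase, Phi, if_neg (not_lt.2 hcase.le)]
    have hc : (0:ℝ) < (n : ℝ) ^ p := Real.rpow_pos_of_pos hN p
    set c := (n : ℝ) ^ p with hcdef
    set q := (n : ℝ) ^ 2 * s ^ 2 with hqdef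
    have hq0 : 0 ≤ q := by rw [hqdef]; positivity
    have hNs : |s| * (n : ℝ) < 1 := (lt_div_iff₀ hN).1 hcase
    have hq1 : q ≤ 1 := by
      rw [hqdef]
      nlinarith [sq_abs s, mul_nonneg (abs_nonneg s) hN.le]
    have hDs : (p * (p - 2) / (2 * c) * (q - 1) * ((n : ℝ) ^ 2 * s)
        + p * (n : ℝ) ^ 2 * s / c) * s
        = (p * (p - 2) / 2 * (q - 1) * q + p * q) / c := by
      rw [hqdef]; field_simp
    rw [hDs]
    have hV : p * (p - 2) / (8 * c) * (q - 1) ^ 2 + p / (2 * c) * (q - 1) + 1 / c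
        = (p * (p - 2) / 8 * (q - 1) ^ 2 + p / 2 * (q - 1) + 1) / c := by
      field_simp
    rw [hV]
    rw [abs_div, abs_of_pos hc, ← mul_div_assoc]
    gcongr
    exact arith_main p q hp1 hp2 hq0 hq1
  · -- 1/n ≤ |s| : power regime
    have hs0 : s ≠ 0 := by
      intro h0; rw [h0, abs_zero] at hcase
      exact absurd hcase (not_le.2 (by positivity))
    have key : ∀ t : ℝ, 1 / (n : ℝ) ≤ t →
        |deriv (Phi p n) t * t| ≤ (p + 24 / ((2 - p) * (4 - p))) * Phi p n t := by
      intro t ht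
      have htpos : 0 < t := lt_of_lt_of_le (by positivity) ht
      rw [deriv_Phi_ge p n hN ht, Phi_ge p n hN ht]
      have hpow : t ^ (p - 1) * t = t ^ p := by
        rw [← Real.rpow_add_one htpos.ne' (p - 1)]; norm_num
      have h1 : |p * t ^ (p - 1) * t| = p * t ^ p := by
        rw [abs_of_nonneg (by positivity : (0:ℝ) ≤ p * t ^ (p-1) * t), mul_assoc, hpow]
      rw [h1]
      have htp : 0 ≤ t ^ p := Real.rpow_nonneg htpos.le p
      nlinarith [mul_nonneg (le_of_lt (by positivity : (0:ℝ) < 24 / ((2 - p) * (4 - p)))) htp]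
    rcases lt_or_gt_of_ne hs0 with hneg | hpos
    · have hns : 1 / (n : ℝ) ≤ -s := by rwa [abs_of_neg hneg] at hcase
      have heq : deriv (Phi p n) s = - deriv (Phi p n) (-s) := by
        have hfun : Phi p n = fun x => Phi p n (-x) := by
          funext x; rw [Phi_even]
        conv_lhs => rw [hfun]
        rw [deriv_comp_neg]
      have := key (-s) hns
      calc |deriv (Phi p n) s * s| = |deriv (Phi p n) (-s) * (-s)| := by
            rw [heq]; rw [abs_mul, abs_mul, abs_neg, abs_neg]
        _ ≤ (p + 24 / ((2 - p) * (4 - p))) * Phi p n (-s) := this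
        _ = (p + 24 / ((2 - p) * (4 - p))) * Phi p n s := by rw [Phi_even]
    · exact key s (by rwa [abs_of_pos hpos] at hcase)
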